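/- Let Γ be a lattice in a semisimple connected real Lie group G = ∏ᵢ Gᵢ (almost direct product of connected normal subgroups), with Γᵢ := Γ ∩ Gᵢ an irreducible lattice in Gᵢ and ∏ Γᵢ of finite index in Γ. Then the commensurability group of Γ in G equals the product of the commensurability groups of the Γᵢ in the Gᵢ: Comm(Γ) = ∏ Comm(Γᵢ). -/

import Mathlib

open Pointwise

section Aux

variable {G : Type*} [Group G]

private lemma aux_mem_sup_of_commute {B C : Subgroup G}
    (hc : ∀ c ∈ C, ∀ b ∈ B, Commute c b) {x : G} (hx : x ∈ B ⊔ C) :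
    ∃ b ∈ B, ∃ c ∈ C, x = b * c := by
  let S : Subgroup G :=
    { carrier := {x | ∃ b ∈ B, ∃ c ∈ C, x = b * c}
      one_mem' := ⟨1, B.one_mem, 1, C.one_mem, by simp⟩
      mul_mem' := by
        rintro x y ⟨b₁, hb₁, c₁, hc₁, rfl⟩ ⟨b₂, hb₂, c₂, hc₂, rfl⟩
        refine ⟨b₁ * b₂, B.mul_mem hb₁ hb₂, c₁ * c₂, C.mul_mem hc₁ hc₂, ?_⟩
        have h := (hc c₁ hc₁ b₂ hb₂).eq
        have e1 : b₁ * c₁ * (b₂ * c₂) = b₁ * (c₁ * b₂) * c₂ := by group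
        rw [e1, h]; group
      inv_mem' := by
        rintro x ⟨b, hb, c, hcc, rfl⟩
        exact ⟨b⁻¹, B.inv_mem hb, c⁻¹, C.inv_mem hcc, by
          rw [mul_inv_rev, (hc c hcc b hb).inv_inv.eq]⟩ }
  have hS : B ⊔ C ≤ S :=
    sup_le (fun b hb => ⟨b, hb, 1, C.one_mem, by simp⟩)
      (fun c hcc => ⟨1, B.one_mem, c, hcc, by simp⟩)
  exact hS hx

private lemma aux_relIndex_sup {A B C : Subgroup G} (hAB : A ≤ B)
    (hA : A.relIndex B ≠ 0) (hc : ∀ c ∈ C, ∀ b ∈ B, Commute c b) :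
    (A ⊔ C).relIndex (B ⊔ C) ≠ 0 := by
  have hK' : A.subgroupOf B ≤ (A ⊔ C).subgroupOf B := fun x hx => by
    rw [Subgroup.mem_subgroupOf] at hx ⊢
    exact le_sup_left (α := Subgroup G) hx
  have hfinK' : ((A ⊔ C).subgroupOf B).index ≠ 0 := by
    intro h0
    exact hA (Nat.eq_zero_of_zero_dvd (h0 ▸ Subgroup.index_dvd_of_le hK'))
  have hfinQ : Finite (B ⧸ (A ⊔ C).subgroupOf B) := (Nat.card_ne_zero.mp hfinK').2
  -- build a surjection onto the quotient of `B ⊔ C`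
  have hwd : ∀ b₁ b₂ : B,
      (QuotientGroup.leftRel ((A ⊔ C).subgroupOf B)) b₁ b₂ →
      (QuotientGroup.leftRel ((A ⊔ C).subgroupOf (B ⊔ C)))
        (Subgroup.inclusion (le_sup_left : B ≤ B ⊔ C) b₁)
        (Subgroup.inclusion (le_sup_left : B ≤ B ⊔ C) b₂) := by
    intro b₁ b₂ h
    rw [QuotientGroup.leftRel_apply] at h ⊢
    rw [Subgroup.mem_subgroupOf] at h ⊢
    simpa using h
  have hsurj : Function.Surjective
      (Quotient.map' (Subgroup.inclusion (le_sup_left : B ≤ B ⊔ C)) hwd :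
        ↥B ⧸ (A ⊔ C).subgroupOf B → ↥(B ⊔ C) ⧸ (A ⊔ C).subgroupOf (B ⊔ C)) := by
    intro q
    refine QuotientGroup.induction_on q ?_
    intro x
    obtain ⟨b, hb, c, hcmem, hx⟩ := aux_mem_sup_of_commute hc x.2
    refine ⟨QuotientGroup.mk (⟨b, hb⟩ : B), ?_⟩
    have : (Quotient.map' (Subgroup.inclusion (le_sup_left : B ≤ B ⊔ C)) hwd
        (QuotientGroup.mk (⟨b, hb⟩ : B)))
        = QuotientGroup.mk (Subgroup.inclusion (le_sup_left : B ≤ B ⊔ C) ⟨b, hb⟩) := rfl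
    rw [this]
    rw [QuotientGroup.eq]
    rw [Subgroup.mem_subgroupOf]
    have hco : ((((Subgroup.inclusion (le_sup_left : B ≤ B ⊔ C)) ⟨b, hb⟩)⁻¹ * x :
        ↥(B ⊔ C)) : G) = c := by
      push_cast [Subgroup.coe_inclusion]
      rw [hx]; group
    rw [hco]
    exact (le_sup_right : C ≤ A ⊔ C) hcmem
  have hfin2 : Finite (↥(B ⊔ C) ⧸ (A ⊔ C).subgroupOf (B ⊔ C)) :=
    Finite.of_surjective _ hsurj
  exact Subgroup.index_ne_zero_of_finite

private lemma aux_commensurable_sup {A B C : Subgroup G} (hAB : Subgroup.Commensurable A B)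
    (hcA : ∀ c ∈ C, ∀ a ∈ A, Commute c a) (hcB : ∀ c ∈ C, ∀ b ∈ B, Commute c b) :
    Subgroup.Commensurable (A ⊔ C) (B ⊔ C) := by
  constructor
  · have h1 : ((A ⊓ B) ⊔ C).relIndex (B ⊔ C) ≠ 0 := by
      refine aux_relIndex_sup inf_le_right ?_ hcB
      rw [Subgroup.inf_relIndex_right]
      exact hAB.1
    intro h0
    exact h1 (Subgroup.relIndex_eq_zero_of_le_left
      (sup_le_sup_right inf_le_left C) h0)
  · have h2 : ((A ⊓ B) ⊔ C).relIndex (A ⊔ C) ≠ 0 := by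
      refine aux_relIndex_sup inf_le_left ?_ hcA
      rw [Subgroup.inf_relIndex_left]
      exact hAB.2
    intro h0
    exact h2 (Subgroup.relIndex_eq_zero_of_le_left
      (sup_le_sup_right inf_le_right C) h0)

private lemma aux_smul_eq {x : G} {S : Subgroup G} (h : ∀ s ∈ S, Commute x s) :
    ConjAct.toConjAct x • S = S := by
  ext y
  rw [Subgroup.mem_smul_pointwise_iff_exists]
  constructor
  · rintro ⟨s, hs, rfl⟩
    have : ConjAct.toConjAct x • s = s := by
      rw [ConjAct.smul_def, ConjAct.ofConjAct_toConjAct, (h s hs).eq, mul_inv_cancel_right]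
    rw [this]; exact hs
  · intro hy
    refine ⟨y, hy, ?_⟩
    rw [ConjAct.smul_def, ConjAct.ofConjAct_toConjAct, (h y hy).eq, mul_inv_cancel_right]

end Aux

/-- Let `Γ` be a lattice in a semisimple connected real Lie group `G = ∏ᵢ Gᵢ`
(an almost direct product of connected normal subgroups: the `Gᵢ` are normal, pairwise
commuting, and generate `G`), with `Γᵢ := Γ ∩ Gᵢ` an irreducible lattice in `Gᵢ` and
`∏ Γᵢ` of finite index in `Γ`.  Then the commensurability group of `Γ` in `G` is the
product of the commensurability groups of the `Γᵢ` in the `Gᵢ`: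
`Comm(Γ) = ∏ Comm(Γᵢ)`. -/
theorem stmt_13 {G : Type*} [Group G] [TopologicalSpace G] [IsTopologicalGroup G]
    {ι : Type*} [Fintype ι]
    (Gi : ι → Subgroup G) (hnorm : ∀ i, (Gi i).Normal)
    (hconn : ∀ i, IsConnected ((Gi i : Set G)))
    (hcomm : ∀ i j, i ≠ j → ∀ x ∈ Gi i, ∀ y ∈ Gi j, Commute x y)
    (htop : (⨆ i, Gi i) = ⊤)
    (Γ : Subgroup G) (hdisc : DiscreteTopology Γ)
    (hfin : ((⨆ i, Γ ⊓ Gi i).subgroupOf Γ).index ≠ 0) :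
    Subgroup.Commensurable.commensurator Γ
      = ⨆ i, (Subgroup.Commensurable.commensurator (Γ ⊓ Gi i) ⊓ Gi i) := by
  classical
  set Γ' : Subgroup G := ⨆ i, Γ ⊓ Gi i with hΓ'def
  have hΓ'le : Γ' ≤ Γ := iSup_le fun i => inf_le_left
  -- commensurability of Γ' and Γ
  have hcommens' : Subgroup.Commensurable Γ' Γ := by
    constructor
    · exact hfin
    · rw [Subgroup.relIndex_eq_one.mpr hΓ'le]; exact one_ne_zero
  rw [← Subgroup.Commensurable.eq hcommens']
  -- elements of `Gi i` commute with everything in the "other factors"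
  have hCcomm : ∀ i, ∀ x ∈ Gi i,
      ∀ s ∈ (⨆ j, ⨆ (_ : j ≠ i), (Γ ⊓ Gi j)), Commute x s := by
    intro i x hx s hs
    have hle : (⨆ j, ⨆ (_ : j ≠ i), (Γ ⊓ Gi j)) ≤ Subgroup.centralizer {x} := by
      refine iSup_le fun j => iSup_le fun hji => ?_
      intro y hy
      rw [Subgroup.mem_centralizer_iff]
      intro z hz
      rw [Set.mem_singleton_iff] at hz
      rw [hz]
      exact (hcomm i j (Ne.symm hji) x hx y hy.2).eq
    have h2 := hle hs
    rw [Subgroup.mem_centralizer_iff] at h2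
    exact h2 x (Set.mem_singleton_iff.mpr rfl)
  have hCcomm' : ∀ i, ∀ x ∈ Gi i,
      ∀ s ∈ (⨆ j, ⨆ (_ : j ≠ i), (Γ ⊓ Gi j)), x * s = s * x := by
    intro i x hx s hs
    exact (hCcomm i x hx s hs).eq
  -- split Γ' at index i
  have hsplit : ∀ i, Γ' = (Γ ⊓ Gi i) ⊔ (⨆ j, ⨆ (_ : j ≠ i), (Γ ⊓ Gi j)) := by
    intro i
    rw [hΓ'def]
    exact iSup_split_single _ i
  apply le_antisymm
  · -- hard direction
    intro g hg
    rw [Subgroup.Commensurable.commensurator_mem_iff] at hg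
    -- decompose g as a product over the factors
    have hP : Pairwise fun i j : ι => ∀ x y : G, x ∈ Gi i → y ∈ Gi j → Commute x y :=
      fun {i j} hij x y hx hy => hcomm i j hij x hx y hy
    have hgrange : g ∈ (Subgroup.noncommPiCoprod hP).range := by
      rw [Subgroup.noncommPiCoprod_range, htop]; trivial
    obtain ⟨u, hu⟩ := hgrange
    have hgprod : g = Finset.univ.noncommProd (fun i => (u i : G))
        (fun i _ j _ h => hP h _ _ (u i).2 (u j).2) := by
      rw [← hu, Subgroup.noncommPiCoprod_apply]
    -- for each i, conjugation by g on subgroups of `Gi i` agrees with conjugation by `u i`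
    have hkey : ∀ i, ConjAct.toConjAct g • (Γ ⊓ Gi i) =
        ConjAct.toConjAct (u i : G) • (Γ ⊓ Gi i) := by
      intro i
      have hpeel : (Finset.univ.erase i).noncommProd (fun j => (u j : G))
            (fun a ha b hb h => hP h _ _ (u a).2 (u b).2) * (u i : G)
          = Finset.univ.noncommProd (fun i => (u i : G))
            (fun i _ j _ h => hP h _ _ (u i).2 (u j).2) :=
        Finset.noncommProd_erase_mul Finset.univ (Finset.mem_univ i) _ _
      set c : G := (Finset.univ.erase i).noncommProd (fun j => (u j : G))
        (fun a ha b hb h => hP h _ _ (u a).2 (u b).2) with hc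
      have hgc : g = c * (u i : G) := by rw [hgprod, ← hpeel]
      have hccomm : ∀ s ∈ Gi i, Commute c s := by
        intro s hs
        refine (Finset.noncommProd_commute _ _ _ s ?_).symm
        intro j hj
        have hji : j ≠ i := (Finset.mem_erase.mp hj).1
        exact hcomm i j (Ne.symm hji) s hs (u j : G) (u j).2
      have hT : ConjAct.toConjAct (u i : G) • (Γ ⊓ Gi i) ≤ Gi i := by
        calc ConjAct.toConjAct (u i : G) • (Γ ⊓ Gi i)
            ≤ ConjAct.toConjAct (u i : G) • Gi i :=
              Subgroup.pointwise_smul_le_pointwise_smul_iff.mpr inf_le_right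
          _ = Gi i := (hnorm i).conjAct _
      rw [hgc, map_mul, mul_smul]
      exact aux_smul_eq (fun s hs => hccomm s (hT hs))
    -- now show `u i` lies in the commensurator of `Γ ⊓ Gi i`
    have hui : ∀ i, (u i : G) ∈ Subgroup.Commensurable.commensurator (Γ ⊓ Gi i) := by
      intro i
      rw [Subgroup.Commensurable.commensurator_mem_iff, ← hkey i]
      set P : Subgroup G := ConjAct.toConjAct g • Γ' with hPdef
      set D : Subgroup G := ConjAct.toConjAct g • (Γ ⊓ Gi i) with hDdef
      have hDP : D ≤ P :=
        Subgroup.pointwise_smul_le_pointwise_smul_iff.mpr (le_iSup (fun i => Γ ⊓ Gi i) i)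
      have hDGi : D ≤ Gi i := by
        rw [hDdef, hkey i]
        calc ConjAct.toConjAct (u i : G) • (Γ ⊓ Gi i)
            ≤ ConjAct.toConjAct (u i : G) • Gi i :=
              Subgroup.pointwise_smul_le_pointwise_smul_iff.mpr inf_le_right
          _ = Gi i := (hnorm i).conjAct _
      have hPg : Subgroup.Commensurable P Γ' := hg
      -- first relIndex
      have r1 : Γ'.relIndex D ≠ 0 := by
        intro h0
        exact hPg.2 (Subgroup.relIndex_eq_zero_of_le_right hDP h0)
      have r1' : (Γ ⊓ Gi i).relIndex D ≠ 0 := by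
        rw [← Subgroup.inf_relIndex_right Γ' D] at r1
        intro h0
        refine r1 (Subgroup.relIndex_eq_zero_of_le_left ?_ h0)
        exact le_inf (le_trans inf_le_left hΓ'le) (le_trans inf_le_right hDGi)
      -- second relIndex
      have r2 : P.relIndex (Γ ⊓ Gi i) ≠ 0 := by
        intro h0
        exact hPg.1 (Subgroup.relIndex_eq_zero_of_le_right
          (le_iSup (fun i => Γ ⊓ Gi i) i) h0)
      have r2' : D.relIndex (Γ ⊓ Gi i) ≠ 0 := by
        rw [← Subgroup.inf_relIndex_right P (Γ ⊓ Gi i)] at r2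
        intro h0
        refine r2 (Subgroup.relIndex_eq_zero_of_le_left ?_ h0)
        have hPsub : P ≤ ConjAct.toConjAct g • Γ :=
          Subgroup.pointwise_smul_le_pointwise_smul_iff.mpr hΓ'le
        have hconj : (ConjAct.toConjAct g • Γ) ⊓ Gi i = D := by
          rw [hDdef, Subgroup.smul_inf, (hnorm i).conjAct]
        intro x hx
        have hmem : x ∈ (ConjAct.toConjAct g • Γ) ⊓ Gi i := ⟨hPsub hx.1, hx.2.2⟩
        rw [hconj] at hmem
        exact hmem
      exact ⟨r2', r1'⟩
    -- assemble: g is a product of elements of the factors of the RHS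
    rw [hgprod]
    refine Subgroup.noncommProd_mem _ _ ?_
    intro i _
    have : (u i : G) ∈ Subgroup.Commensurable.commensurator (Γ ⊓ Gi i) ⊓ Gi i :=
      ⟨hui i, (u i).2⟩
    exact le_iSup (fun i => Subgroup.Commensurable.commensurator (Γ ⊓ Gi i) ⊓ Gi i) i this
  · -- easy direction
    refine iSup_le fun i => ?_
    intro h hh
    have hcmem : h ∈ Subgroup.Commensurable.commensurator (Γ ⊓ Gi i) := (Subgroup.mem_inf.mp hh).1
    have hGi : h ∈ Gi i := (Subgroup.mem_inf.mp hh).2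
    rw [Subgroup.Commensurable.commensurator_mem_iff] at hcmem
    rw [Subgroup.Commensurable.commensurator_mem_iff]
    set C : Subgroup G := ⨆ j, ⨆ (_ : j ≠ i), (Γ ⊓ Gi j) with hCdef
    have hΓ'split : Γ' = (Γ ⊓ Gi i) ⊔ C := hsplit i
    have hsmulC : ConjAct.toConjAct h • C = C :=
      aux_smul_eq (fun s hs => hCcomm i h hGi s hs)
    have hsmulsplit : ConjAct.toConjAct h • Γ'
        = (ConjAct.toConjAct h • (Γ ⊓ Gi i)) ⊔ C := by
      rw [hΓ'split, Subgroup.smul_sup, hsmulC]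
    have hAle : ConjAct.toConjAct h • (Γ ⊓ Gi i) ≤ Gi i := by
      calc ConjAct.toConjAct h • (Γ ⊓ Gi i)
          ≤ ConjAct.toConjAct h • Gi i :=
            Subgroup.pointwise_smul_le_pointwise_smul_iff.mpr inf_le_right
        _ = Gi i := (hnorm i).conjAct _
    have hmain : Subgroup.Commensurable (ConjAct.toConjAct h • Γ') Γ' := by
      rw [hsmulsplit, hΓ'split]
      refine aux_commensurable_sup hcmem ?_ ?_
      · intro cc hcc a ha
        exact (hCcomm i a (hAle ha) cc hcc).symm
      · intro cc hcc b hb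
        exact (hCcomm i b hb.2 cc hcc).symm
    exact hmain
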